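/- Let T be a finite tree (a nonempty connected acyclic simple graph) and let w : V(T) → ℕ be a weight function. For a vertex v of T, let m(v) denote the maximum of w(K) := ∑_{u ∈ K} w(u) over the connected components K of T − v (with m(v) = 0 if T − v is empty). If v is a centroid of (T,w), i.e. v minimizes m over all vertices of T, then every connected component K of T − v satisfies 2·w(K) ≤ w(T), where w(T) = ∑_{u ∈ V(T)} w(u). -/

import Mathlib

variable {V : Type*}

/-- The total weight of (the support of) a connected component. -/
noncomputable def suppWeight {α : Type*} (G : SimpleGraph α) (w : α → ℕ)
    (c : G.ConnectedComponent) : ℕ :=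
  ∑ᶠ u ∈ c.supp, w u

/-- `maxCompWeight T w v` is the maximum weight of a connected component of `T − v`
(and `0` if `T − v` has no component). -/
noncomputable def maxCompWeight (T : SimpleGraph V) (w : V → ℕ) (v : V) : ℕ :=
  sSup {n | ∃ c : (T.induce {u | u ≠ v}).ConnectedComponent,
    n = suppWeight (T.induce {u | u ≠ v}) (fun u => w u.1) c}

open SimpleGraph Finset

noncomputable def compFinset [Fintype V] (T : SimpleGraph V) (x : V)
    (c : (T.induce {u | u ≠ x}).ConnectedComponent) : Finset V :=
  (Set.toFinite (Subtype.val '' c.supp)).toFinset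

lemma mem_compFinset [Fintype V] {T : SimpleGraph V} {x : V}
    {c : (T.induce {u | u ≠ x}).ConnectedComponent} {a : V} :
    a ∈ compFinset T x c ↔
      ∃ h : a ≠ x, (T.induce {u | u ≠ x}).connectedComponentMk ⟨a, h⟩ = c := by
  constructor
  · intro ha
    rw [compFinset, Set.Finite.mem_toFinset] at ha
    obtain ⟨b, hb, rfl⟩ := ha
    exact ⟨b.2, by rwa [ConnectedComponent.mem_supp_iff] at hb⟩
  · rintro ⟨h, hc⟩
    rw [compFinset, Set.Finite.mem_toFinset]
    exact ⟨⟨a, h⟩, (ConnectedComponent.mem_supp_iff _ _).2 hc, rfl⟩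

lemma suppWeight_eq [Fintype V] (T : SimpleGraph V) (w : V → ℕ) (x : V)
    (c : (T.induce {u | u ≠ x}).ConnectedComponent) :
    suppWeight (T.induce {u | u ≠ x}) (fun u => w u.1) c = ∑ a ∈ compFinset T x c, w a := by
  rw [suppWeight, compFinset,
    ← finsum_mem_image (f := w) (Subtype.val_injective.injOn),
    ← finsum_mem_coe_finset, Set.Finite.coe_toFinset]

lemma suppWeight_le_total [Fintype V] (T : SimpleGraph V) (w : V → ℕ) (x : V)
    (c : (T.induce {u | u ≠ x}).ConnectedComponent) :
    suppWeight (T.induce {u | u ≠ x}) (fun u => w u.1) c ≤ ∑ u, w u := by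
  rw [suppWeight_eq]
  exact Finset.sum_le_sum_of_subset (Finset.subset_univ _)

lemma bddAbove_compWeights [Fintype V] (T : SimpleGraph V) (w : V → ℕ) (x : V) :
    BddAbove {n | ∃ c : (T.induce {u | u ≠ x}).ConnectedComponent,
      n = suppWeight (T.induce {u | u ≠ x}) (fun u => w u.1) c} := by
  refine ⟨∑ u, w u, ?_⟩
  rintro n ⟨c, rfl⟩
  exact suppWeight_le_total T w x c

lemma suppWeight_le_maxCompWeight [Fintype V] (T : SimpleGraph V) (w : V → ℕ) (x : V)
    (c : (T.induce {u | u ≠ x}).ConnectedComponent) :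
    suppWeight (T.induce {u | u ≠ x}) (fun u => w u.1) c ≤ maxCompWeight T w x :=
  le_csSup (bddAbove_compWeights T w x) ⟨c, rfl⟩

lemma exists_maxComp [Fintype V] (T : SimpleGraph V) (w : V → ℕ) {x y : V} (hy : y ≠ x) :
    ∃ c : (T.induce {u | u ≠ x}).ConnectedComponent,
      maxCompWeight T w x = suppWeight (T.induce {u | u ≠ x}) (fun u => w u.1) c :=
by
  have hne : Set.Nonempty {n | ∃ c : (T.induce {u | u ≠ x}).ConnectedComponent,
      n = suppWeight (T.induce {u | u ≠ x}) (fun u => w u.1) c} :=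
    ⟨_, ⟨(T.induce {u | u ≠ x}).connectedComponentMk ⟨y, hy⟩, rfl⟩⟩
  exact Nat.sSup_mem hne (bddAbove_compWeights T w x)

/-- A walk in `G` whose support lies in `s` gives reachability in `G.induce s`. -/
lemma reachable_induce_of_walk {G : SimpleGraph V} {s : Set V} :
    ∀ {a b : V} (p : G.Walk a b), (∀ x ∈ p.support, x ∈ s) →
      ∀ (ha : a ∈ s) (hb : b ∈ s), (G.induce s).Reachable ⟨a, ha⟩ ⟨b, hb⟩ := by
  intro a b p
  induction p with
  | nil => intro _ ha hb; exact Reachable.refl _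
  | @cons a c b h q ih =>
    intro hp ha hb
    have hc : c ∈ s := hp c (by simp)
    have hadj : (G.induce s).Adj ⟨a, ha⟩ ⟨c, hc⟩ := h
    exact hadj.reachable.trans (ih (fun x hx => hp x (by simp [hx])) hc hb)

/-- A walk in `G.induce s` whose support lies in `t` gives reachability in `G.induce t`. -/
lemma reachable_induce_induce {G : SimpleGraph V} {s t : Set V} :
    ∀ {a b : ↥s} (p : (G.induce s).Walk a b), (∀ x ∈ p.support, x.1 ∈ t) →
      ∀ (ha : a.1 ∈ t) (hb : b.1 ∈ t), (G.induce t).Reachable ⟨a.1, ha⟩ ⟨b.1, hb⟩ := by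
  intro a b p
  induction p with
  | nil => intro _ ha hb; exact Reachable.refl _
  | @cons a c b h q ih =>
    intro hp ha hb
    have hc : c.1 ∈ t := hp c (by simp)
    have hadj : (G.induce t).Adj ⟨a.1, ha⟩ ⟨c.1, hc⟩ := h
    exact hadj.reachable.trans (ih (fun x hx => hp x (by simp [hx])) hc hb)

/-- The valuation homomorphism from an induced subgraph. -/
def valHom (G : SimpleGraph V) (s : Set V) : G.induce s →g G :=
  ⟨Subtype.val, fun h => h⟩

/-- Every component of `T − x` contains a neighbour of `x`. -/
lemma exists_adj_mem_compFinset [Fintype V] {T : SimpleGraph V} (hc : T.Connected) (x : V)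
    (c : (T.induce {u | u ≠ x}).ConnectedComponent) :
    ∃ y, T.Adj x y ∧ y ∈ compFinset T x c := by
  classical
  obtain ⟨b, hb⟩ := c.exists_rep
  have hbx : b.1 ≠ x := b.2
  obtain ⟨w0⟩ := hc.preconnected x b.1
  let p := w0.toPath
  have hnn : ¬ (p : T.Walk x b.1).Nil := Walk.not_nil_of_ne (Ne.symm hbx)
  obtain ⟨y, h, q, hq⟩ := Walk.not_nil_iff.mp hnn
  have hp : (p : T.Walk x b.1).IsPath := p.2
  rw [hq, Walk.cons_isPath_iff] at hp
  have hy : y ≠ x := h.ne'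
  have hsup : ∀ z ∈ q.support, z ∈ {u : V | u ≠ x} := by
    intro z hz
    intro hzx
    exact hp.2 (hzx ▸ hz)
  have hreach := reachable_induce_of_walk q hsup hy hbx
  refine ⟨y, h, mem_compFinset.mpr ⟨hy, ?_⟩⟩
  rw [← hb]
  exact ConnectedComponent.sound (hreach.trans (Reachable.refl _))

/-- In a tree, a component of `T − x` contains at most one neighbour of `x`. -/
lemma adj_mem_comp_unique [Fintype V] {T : SimpleGraph V} (hT : T.IsTree) {x a a' : V}
    {c : (T.induce {u | u ≠ x}).ConnectedComponent}
    (hadj : T.Adj x a) (hadj' : T.Adj x a')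
    (ha : a ∈ compFinset T x c) (ha' : a' ∈ compFinset T x c) : a = a' := by
  classical
  by_contra hne
  obtain ⟨hax, hca⟩ := mem_compFinset.mp ha
  obtain ⟨hax', hca'⟩ := mem_compFinset.mp ha'
  have hreach : (T.induce {u | u ≠ x}).Reachable ⟨a', hax'⟩ ⟨a, hax⟩ :=
    ConnectedComponent.exact (hca'.trans hca.symm)
  obtain ⟨q0⟩ := hreach
  let q1 : T.Walk a' a := q0.map (valHom T {u | u ≠ x})
  have hxq : x ∉ q1.support := by
    intro hx
    replace hx : x ∈ (q0.map (valHom T {u | u ≠ x})).support := hx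
    rw [Walk.support_map, List.mem_map] at hx
    obtain ⟨z, _, hz⟩ := hx
    exact z.2 hz
  have hxq2 : x ∉ (q1.toPath : T.Walk a' a).support :=
    fun hx => hxq (Walk.support_toPath_subset q1 hx)
  have hP2 : (Walk.cons hadj' (q1.toPath : T.Walk a' a)).IsPath :=
    (Walk.cons_isPath_iff _ _).mpr ⟨q1.toPath.2, hxq2⟩
  have hP1 : (Walk.cons hadj (Walk.nil : T.Walk a a)).IsPath := by
    rw [Walk.cons_isPath_iff]
    exact ⟨Walk.IsPath.nil, by simp [hadj.ne]⟩
  have heq := (hT.existsUnique_path x a).unique hP1 hP2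
  have hmem : a' ∈ (Walk.cons hadj (Walk.nil : T.Walk a a)).support := by
    rw [heq]
    simp
  have hmem' : a' = x ∨ a' = a := by simpa using hmem
  rcases hmem' with h | h
  · exact hadj'.ne' h
  · exact hne h.symm

lemma walk_invariant [Fintype V] {T : SimpleGraph V} {x u : V}
    {c : (T.induce {u | u ≠ x}).ConnectedComponent}
    (huc : ∀ z, T.Adj x z → z ∈ compFinset T x c → z = u) :
    ∀ {s t : ↥{y : V | y ≠ u}} (p : (T.induce {y | y ≠ u}).Walk s t),
      (s.1 = x ∨ s.1 ∉ compFinset T x c) → (t.1 = x ∨ t.1 ∉ compFinset T x c) := by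
  intro s t p
  induction p with
  | nil => exact id
  | @cons s z t h q ih =>
    intro hs
    apply ih
    by_cases hzx : z.1 = x
    · exact Or.inl hzx
    right
    intro hzc
    have hTadj : T.Adj s.1 z.1 := h
    have hcase : s.1 = x → False := by
      intro hsx
      exact z.2 (huc z.1 (hsx ▸ hTadj) hzc)
    rcases hs with hsx | hsc
    · exact hcase hsx
    by_cases hsx : s.1 = x
    · exact hcase hsx
    have hadjx : (T.induce {y : V | y ≠ x}).Adj ⟨s.1, hsx⟩ ⟨z.1, hzx⟩ := hTadj
    obtain ⟨hz1, hzc'⟩ := mem_compFinset.mp hzc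
    have hmk : (T.induce {y : V | y ≠ x}).connectedComponentMk ⟨s.1, hsx⟩ = c := by
      rw [← hzc']
      exact ConnectedComponent.sound hadjx.reachable
    exact hsc (mem_compFinset.mpr ⟨hsx, hmk⟩)

lemma key [Fintype V] (T : SimpleGraph V) (hT : T.IsTree) (w : V → ℕ) :
    ∀ (n : ℕ) (x : V), (∀ y, maxCompWeight T w x ≤ maxCompWeight T w y) →
      ∀ c : (T.induce {u | u ≠ x}).ConnectedComponent,
        (compFinset T x c).card ≤ n →
        2 * suppWeight (T.induce {u | u ≠ x}) (fun u => w u.1) c ≤ ∑ u, w u := by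
  classical
  intro n
  induction n with
  | zero =>
    intro x _ c hcard
    obtain ⟨b, hb⟩ := c.exists_rep
    have hbmem : b.1 ∈ compFinset T x c := mem_compFinset.mpr ⟨b.2, hb⟩
    rw [Nat.le_zero, Finset.card_eq_zero] at hcard
    rw [hcard] at hbmem
    exact absurd hbmem (Finset.notMem_empty _)
  | succ n ih =>
    intro x hx c hcard
    by_contra hcon
    push_neg at hcon
    obtain ⟨u, hadj, huc⟩ := exists_adj_mem_compFinset hT.isConnected x c
    have hxu : x ≠ u := hadj.ne
    set cx := (T.induce {y : V | y ≠ u}).connectedComponentMk ⟨x, hxu⟩ with hcx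
    have huniq : ∀ z, T.Adj x z → z ∈ compFinset T x c → z = u :=
      fun z hz hzc => adj_mem_comp_unique hT hz hadj hzc huc
    -- Claim A: the component of x in T − u is disjoint from c
    have hdisj : Disjoint (compFinset T u cx) (compFinset T x c) := by
      rw [Finset.disjoint_left]
      intro a hacx hac
      obtain ⟨hau, hmk⟩ := mem_compFinset.mp hacx
      obtain ⟨p⟩ : (T.induce {y : V | y ≠ u}).Reachable ⟨x, hxu⟩ ⟨a, hau⟩ :=
        ConnectedComponent.exact (hcx.symm.trans hmk.symm)
      rcases walk_invariant huniq p (Or.inl rfl) with h | h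
      · exact (mem_compFinset.mp hac).1 h
      · exact h hac
    have hsum : suppWeight (T.induce {y : V | y ≠ u}) (fun a => w a.1) cx
        + suppWeight (T.induce {y : V | y ≠ x}) (fun a => w a.1) c ≤ ∑ a, w a := by
      rw [suppWeight_eq, suppWeight_eq, ← Finset.sum_union hdisj]
      exact Finset.sum_le_sum_of_subset (Finset.subset_univ _)
    -- Claim B: every other component of T − u sits inside c minus u
    have hclaimB : ∀ D : (T.induce {y : V | y ≠ u}).ConnectedComponent, D ≠ cx →
        compFinset T u D ⊆ (compFinset T x c).erase u := by
      intro D hD a ha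
      obtain ⟨hau, hmkD⟩ := mem_compFinset.mp ha
      rw [Finset.mem_erase]
      refine ⟨hau, ?_⟩
      by_contra hac
      have hax : a ≠ x := by
        intro h
        apply hD
        rw [← hmkD, hcx]
        congr 1
        exact Subtype.ext h
      set c' := (T.induce {y : V | y ≠ x}).connectedComponentMk ⟨a, hax⟩ with hc'
      have hcc' : c' ≠ c := fun h => hac (mem_compFinset.mpr ⟨hax, hc'.symm.trans h⟩)
      obtain ⟨y, hyx, hyc'⟩ := exists_adj_mem_compFinset hT.isConnected x c'
      obtain ⟨hy1, hy2⟩ := mem_compFinset.mp hyc'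
      have hmkk : (T.induce {y : V | y ≠ x}).connectedComponentMk ⟨a, hax⟩
          = (T.induce {y : V | y ≠ x}).connectedComponentMk ⟨y, hy1⟩ := by
        rw [hy2]
      obtain ⟨p0⟩ := ConnectedComponent.exact hmkk
      obtain ⟨hu1, hu2⟩ := mem_compFinset.mp huc
      have hsup : ∀ z ∈ p0.support, z.1 ∈ {t : V | t ≠ u} := by
        intro z hz hzu
        have hrz : (T.induce {y : V | y ≠ x}).Reachable ⟨a, hax⟩ z := ⟨p0.takeUntil z hz⟩
        have hz2 : (T.induce {y : V | y ≠ x}).connectedComponentMk z = c := by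
          have : z = ⟨u, hu1⟩ := Subtype.ext hzu
          rw [this]; exact hu2
        exact hcc' (hc'.trans ((ConnectedComponent.sound hrz).trans hz2))
      have hyu : y ≠ u := by
        intro h
        have hyeq : (⟨y, hy1⟩ : {t : V // t ≠ x}) = ⟨u, hu1⟩ := Subtype.ext h
        rw [hyeq] at hy2
        exact hcc' (hy2.symm.trans hu2)
      have hau' : a ∈ {t : V | t ≠ u} := hau
      have hreach2 := reachable_induce_induce p0 hsup hau' hyu
      have hadjyx : (T.induce {t : V | t ≠ u}).Adj ⟨y, hyu⟩ ⟨x, hxu⟩ := hyx.symm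
      have hfin : (T.induce {t : V | t ≠ u}).Reachable ⟨a, hau⟩ ⟨x, hxu⟩ :=
        hreach2.trans hadjyx.reachable
      apply hD
      rw [← hmkD, hcx]
      exact ConnectedComponent.sound hfin
    -- Finish
    have hwc_le := suppWeight_le_maxCompWeight T w x c
    obtain ⟨D, hDmax⟩ := exists_maxComp T w (y := x) hxu
    have h1 : suppWeight (T.induce {y : V | y ≠ x}) (fun a => w a.1) c
        ≤ suppWeight (T.induce {y : V | y ≠ u}) (fun a => w a.1) D :=
      le_trans hwc_le (le_trans (hx u) (le_of_eq hDmax))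
    by_cases hDcx : D = cx
    · rw [hDcx] at h1
      omega
    · have hsub := hclaimB D hDcx
      have h2 : suppWeight (T.induce {y : V | y ≠ u}) (fun a => w a.1) D
          ≤ suppWeight (T.induce {y : V | y ≠ x}) (fun a => w a.1) c := by
        rw [suppWeight_eq, suppWeight_eq]
        exact le_trans (Finset.sum_le_sum_of_subset hsub)
          (Finset.sum_le_sum_of_subset (Finset.erase_subset _ _))
      have hcard' : (compFinset T u D).card ≤ n := by
        have h3 := Finset.card_le_card hsub
        rw [Finset.card_erase_of_mem huc] at h3
        omega
      have hu_cent : ∀ y, maxCompWeight T w u ≤ maxCompWeight T w y := by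
        intro y
        calc maxCompWeight T w u = _ := hDmax
          _ ≤ suppWeight (T.induce {y : V | y ≠ x}) (fun a => w a.1) c := h2
          _ ≤ maxCompWeight T w x := hwc_le
          _ ≤ maxCompWeight T w y := hx y
      have hfinal := ih u hu_cent D hcard'
      omega

/-- If `v` is a centroid of the weighted tree `(T, w)`, then every connected
component `K` of `T − v` satisfies `2 w(K) ≤ w(T)`. -/
theorem stmt6 {V : Type*} [Fintype V] (T : SimpleGraph V) (hT : T.IsTree)
    (w : V → ℕ) (v : V) (hv : ∀ u : V, maxCompWeight T w v ≤ maxCompWeight T w u) :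
    ∀ c : (T.induce {u | u ≠ v}).ConnectedComponent,
      2 * suppWeight (T.induce {u | u ≠ v}) (fun u => w u.1) c ≤ ∑ u, w u := by
  intro c
  exact key T hT w (compFinset T v c).card v hv c le_rfl
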